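/- The unique c ∈ (0, 1/4] solving the Hardy-constant equation for β = 2π, i.e. satisfying √c·tan(√c·π/2) = 2·(Γ((3+√(1−4c))/4)/Γ((1+√(1−4c))/4))², lies in the interval (0.2053, 0.2054). -/

import Mathlib

open Real Set

/-- `c` solves the Hardy-constant equation for the angle `β`. -/
def hardyEq (c β : ℝ) : Prop :=
  Real.sqrt c * Real.tan (Real.sqrt c * ((β - Real.pi) / 2)) =
    2 * (Real.Gamma ((3 + Real.sqrt (1 - 4 * c)) / 4) /
         Real.Gamma ((1 + Real.sqrt (1 - 4 * c)) / 4)) ^ 2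


noncomputable def rr (x : ℝ) : ℝ := Real.Gamma (x + 1/2) / Real.Gamma x

lemma rr_pos {x : ℝ} (hx : 0 < x) : 0 < rr x :=
  div_pos (Real.Gamma_pos_of_pos (by linarith)) (Real.Gamma_pos_of_pos hx)

lemma logGamma_quad {a b : ℝ} (ha : 0 < a) (hab : a < b) :
    Real.log (Real.Gamma (a + 1/2)) + Real.log (Real.Gamma b) ≤
      Real.log (Real.Gamma a) + Real.log (Real.Gamma (b + 1/2)) := by
  have hT : (0:ℝ) < b + 1/2 - a := by linarith
  have hb2 : (0:ℝ) < b + 1/2 := by linarith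
  have hc := Real.convexOn_log_Gamma.2 (mem_Ioi.2 ha) (mem_Ioi.2 hb2)
    (show (0:ℝ) ≤ (b - a)/(b + 1/2 - a) from div_nonneg (by linarith) (by linarith))
    (show (0:ℝ) ≤ (1/2)/(b + 1/2 - a) from div_nonneg (by norm_num) (by linarith))
    (show (b - a)/(b + 1/2 - a) + (1/2)/(b + 1/2 - a) = 1 by
      rw [← add_div, div_eq_one_iff_eq (ne_of_gt hT)]; ring)
  have hd := Real.convexOn_log_Gamma.2 (mem_Ioi.2 ha) (mem_Ioi.2 hb2)
    (show (0:ℝ) ≤ (1/2)/(b + 1/2 - a) from div_nonneg (by norm_num) (by linarith))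
    (show (0:ℝ) ≤ (b - a)/(b + 1/2 - a) from div_nonneg (by linarith) (by linarith))
    (show (1/2)/(b + 1/2 - a) + (b - a)/(b + 1/2 - a) = 1 by
      rw [← add_div, div_eq_one_iff_eq (ne_of_gt hT)]; ring)
  rw [smul_eq_mul, smul_eq_mul, smul_eq_mul, smul_eq_mul] at hc hd
  have e1 : (b - a)/(b + 1/2 - a) * a + (1/2)/(b + 1/2 - a) * (b + 1/2) = a + 1/2 := by
    rw [div_mul_eq_mul_div (b - a) (b + 1/2 - a) a,
      div_mul_eq_mul_div ((1:ℝ)/2) (b + 1/2 - a) (b + 1/2), ← add_div,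
      div_eq_iff (ne_of_gt hT)]; ring
  have e2 : (1/2)/(b + 1/2 - a) * a + (b - a)/(b + 1/2 - a) * (b + 1/2) = b := by
    rw [div_mul_eq_mul_div ((1:ℝ)/2) (b + 1/2 - a) a,
      div_mul_eq_mul_div (b - a) (b + 1/2 - a) (b + 1/2), ← add_div,
      div_eq_iff (ne_of_gt hT)]; ring
  rw [e1] at hc
  rw [e2] at hd
  simp only [Function.comp_apply] at hc hd
  have hsum : (b - a)/(b + 1/2 - a) + (1/2)/(b + 1/2 - a) = 1 := by
    rw [← add_div, div_eq_one_iff_eq (ne_of_gt hT)]; ring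
  have key : (b - a)/(b + 1/2 - a) * Real.log (Real.Gamma a)
      + (1/2)/(b + 1/2 - a) * Real.log (Real.Gamma (b + 1/2))
      + ((1/2)/(b + 1/2 - a) * Real.log (Real.Gamma a)
      + (b - a)/(b + 1/2 - a) * Real.log (Real.Gamma (b + 1/2)))
      = Real.log (Real.Gamma a) + Real.log (Real.Gamma (b + 1/2)) := by
    linear_combination (Real.log (Real.Gamma a) + Real.log (Real.Gamma (b + 1/2))) * hsum
  linarith [hc, hd, key]

lemma rr_mono {a b : ℝ} (ha : 0 < a) (hab : a ≤ b) : rr a ≤ rr b := by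
  rcases eq_or_lt_of_le hab with rfl | h
  · exact le_refl _
  · have hb : 0 < b := ha.trans h
    have hq := logGamma_quad ha h
    have g1 := Real.Gamma_pos_of_pos ha
    have g2 := Real.Gamma_pos_of_pos hb
    have g3 := Real.Gamma_pos_of_pos (show (0:ℝ) < a + 1/2 by linarith)
    have g4 := Real.Gamma_pos_of_pos (show (0:ℝ) < b + 1/2 by linarith)
    rw [← Real.log_mul (ne_of_gt g3) (ne_of_gt g2), ← Real.log_mul (ne_of_gt g1) (ne_of_gt g4)]
      at hq
    have := (Real.log_le_log_iff (by positivity) (by positivity)).1 hq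
    rw [rr, rr, div_le_div_iff₀ g1 g2]
    linarith

lemma rr_step {x : ℝ} (hx : 0 < x) : rr x = x/(x + 1/2) * rr (x + 1) := by
  have h1 : x + 1 = x + 1 := rfl
  have e1 : Real.Gamma (x + 1) = x * Real.Gamma x := by
    rw [Real.Gamma_add_one (ne_of_gt hx)]
  have e2 : Real.Gamma (x + 1 + 1/2) = (x + 1/2) * Real.Gamma (x + 1/2) := by
    rw [show x + 1 + 1/2 = (x + 1/2) + 1 by ring,
      Real.Gamma_add_one (by positivity)]
  have g1 := Real.Gamma_pos_of_pos hx
  have g2 := Real.Gamma_pos_of_pos (show (0:ℝ) < x + 1/2 by linarith)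
  rw [rr, rr, e1, e2]
  field_simp

lemma rr_mul {y : ℝ} (hy : 0 < y) : rr y * rr (y + 1/2) = y := by
  have g1 := Real.Gamma_pos_of_pos hy
  have g2 := Real.Gamma_pos_of_pos (show (0:ℝ) < y + 1/2 by linarith)
  rw [rr, rr, show y + 1/2 + 1/2 = y + 1 by ring, Real.Gamma_add_one (ne_of_gt hy)]
  field_simp

lemma rr_le_sqrt {y : ℝ} (hy : 0 < y) : rr y ≤ Real.sqrt y := by
  have h1 : rr y ≤ rr (y + 1/2) := rr_mono hy (by linarith)
  have h2 := rr_mul hy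
  have h3 := rr_pos hy
  rw [show rr y ≤ Real.sqrt y ↔ rr y ^ 2 ≤ y from Real.le_sqrt h3.le (by positivity)]
  nlinarith

lemma sqrt_le_rr {y : ℝ} (hy : 0 < y) : y / Real.sqrt (y + 1/2) ≤ rr y := by
  have h2 := rr_mul hy
  have h3 := rr_pos (show (0:ℝ) < y + 1/2 by linarith)
  have h4 : rr (y + 1/2) ≤ Real.sqrt (y + 1/2) := rr_le_sqrt (by linarith)
  have h5 : (0:ℝ) < Real.sqrt (y + 1/2) := Real.sqrt_pos.2 (by linarith)
  rw [div_le_iff₀ h5]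
  calc y = rr y * rr (y + 1/2) := h2.symm
    _ ≤ rr y * Real.sqrt (y + 1/2) := by
        exact mul_le_mul_of_nonneg_left h4 (rr_pos hy).le

lemma rr_prod (n : ℕ) {x : ℝ} (hx : 0 < x) :
    rr x = (∏ j ∈ Finset.range n, ((x + j)/(x + j + 1/2))) * rr (x + n) := by
  induction n with
  | zero => simp
  | succ k ih =>
    rw [Finset.prod_range_succ, ih, mul_assoc]
    congr 1
    have hxk : (0:ℝ) < x + k := by positivity
    rw [rr_step hxk]
    push_cast
    ring_nf

lemma rr_chunk {a b Q : ℝ} (ha : 0 < a) (hb : a + 100 = b)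
    (hQ : Q ≤ ∏ j ∈ Finset.range 100, ((a + j)/(a + j + 1/2))) :
    Q * rr b ≤ rr a := by
  subst hb
  rw [rr_prod 100 ha]
  push_cast
  exact mul_le_mul_of_nonneg_right hQ (rr_pos (by linarith)).le

lemma rr_chunk' {a b Q : ℝ} (ha : 0 < a) (hb : a + 100 = b)
    (hQ : (∏ j ∈ Finset.range 100, ((a + j)/(a + j + 1/2))) ≤ Q) :
    rr a ≤ Q * rr b := by
  subst hb
  rw [rr_prod 100 ha]
  push_cast
  exact mul_le_mul_of_nonneg_right hQ (rr_pos (by linarith)).le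


lemma sum_exp_re (x : ℝ) : (∑ m ∈ Finset.range 8, (x*Complex.I)^m / m.factorial).re
    = 1 - x^2/2 + x^4/24 - x^6/720 := by
  simp [Finset.sum_range_succ, Nat.factorial, mul_pow, pow_succ, Complex.div_re,
    Complex.normSq, Complex.ext_iff]
  ring

lemma sum_exp_im (x : ℝ) : (∑ m ∈ Finset.range 8, (x*Complex.I)^m / m.factorial).im
    = x - x^3/6 + x^5/120 - x^7/5040 := by
  simp [Finset.sum_range_succ, Nat.factorial, mul_pow, pow_succ, Complex.div_re,
    Complex.normSq, Complex.ext_iff]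
  ring

lemma cos_poly_bound {x : ℝ} (hx : |x| ≤ 1) :
    |Real.cos x - (1 - x^2/2 + x^4/24 - x^6/720)| ≤ |x|^8 * (9/322560) := by
  have habs : ‖(x:ℂ)*Complex.I‖ ≤ 1 := by
    rw [norm_mul, Complex.norm_I, Complex.norm_real, Real.norm_eq_abs, mul_one]; exact hx
  have hb := Complex.exp_bound habs (n := 8) (by norm_num)
  have h1 : |Real.cos x - (1 - x^2/2 + x^4/24 - x^6/720)|
      = |(Complex.exp (x*Complex.I) - ∑ m ∈ Finset.range 8, (x*Complex.I)^m / m.factorial).re| := by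
    rw [Complex.sub_re, Complex.exp_ofReal_mul_I_re, sum_exp_re]
  rw [h1]
  calc |(Complex.exp (x*Complex.I) - ∑ m ∈ Finset.range 8, (x*Complex.I)^m / m.factorial).re|
      ≤ ‖Complex.exp (x*Complex.I) - ∑ m ∈ Finset.range 8, (x*Complex.I)^m / m.factorial‖ :=
        Complex.abs_re_le_norm _
    _ ≤ ‖(x:ℂ)*Complex.I‖ ^ 8 * (Nat.succ 8 * ((Nat.factorial 8) * (8:ℕ) : ℝ)⁻¹) := hb
    _ ≤ |x|^8 * (9/322560) := by
        rw [norm_mul, Complex.norm_I, Complex.norm_real, Real.norm_eq_abs, mul_one]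
        norm_num [Nat.factorial]

lemma sin_poly_bound {x : ℝ} (hx : |x| ≤ 1) :
    |Real.sin x - (x - x^3/6 + x^5/120 - x^7/5040)| ≤ |x|^8 * (9/322560) := by
  have habs : ‖(x:ℂ)*Complex.I‖ ≤ 1 := by
    rw [norm_mul, Complex.norm_I, Complex.norm_real, Real.norm_eq_abs, mul_one]; exact hx
  have hb := Complex.exp_bound habs (n := 8) (by norm_num)
  have h1 : |Real.sin x - (x - x^3/6 + x^5/120 - x^7/5040)|
      = |(Complex.exp (x*Complex.I) - ∑ m ∈ Finset.range 8, (x*Complex.I)^m / m.factorial).im| := by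
    rw [Complex.sub_im, Complex.exp_ofReal_mul_I_im, sum_exp_im]
  rw [h1]
  calc |(Complex.exp (x*Complex.I) - ∑ m ∈ Finset.range 8, (x*Complex.I)^m / m.factorial).im|
      ≤ ‖Complex.exp (x*Complex.I) - ∑ m ∈ Finset.range 8, (x*Complex.I)^m / m.factorial‖ :=
        Complex.abs_im_le_norm _
    _ ≤ ‖(x:ℂ)*Complex.I‖ ^ 8 * (Nat.succ 8 * ((Nat.factorial 8) * (8:ℕ) : ℝ)⁻¹) := hb
    _ ≤ |x|^8 * (9/322560) := by
        rw [norm_mul, Complex.norm_I, Complex.norm_real, Real.norm_eq_abs, mul_one]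
        norm_num [Nat.factorial]

lemma rr_a1_lb : (442120761401/1000000000000 : ℝ) ≤ rr (35571187/100000000 : ℝ) := by
  have t0 : (22097777342687372707793477343/500000000000000000000000000000 : ℝ) * rr (10035571187/100000000 : ℝ) ≤ rr (35571187/100000000 : ℝ) :=
    rr_chunk (by norm_num) (by norm_num) (by norm_num [Finset.prod_range_succ])
  have t1 : (176823589639287004271321577113/250000000000000000000000000000 : ℝ) * rr (20035571187/100000000 : ℝ) ≤ rr (10035571187/100000000 : ℝ) :=
    rr_chunk (by norm_num) (by norm_num) (by norm_num [Finset.prod_range_succ])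
  have t2 : (163313731442248828731728925753/200000000000000000000000000000 : ℝ) * rr (30035571187/100000000 : ℝ) ≤ rr (20035571187/100000000 : ℝ) :=
    rr_chunk (by norm_num) (by norm_num) (by norm_num [Finset.prod_range_succ])
  have t3 : (433031802036065096352100801721/500000000000000000000000000000 : ℝ) * rr (40035571187/100000000 : ℝ) ≤ rr (30035571187/100000000 : ℝ) :=
    rr_chunk (by norm_num) (by norm_num) (by norm_num [Finset.prod_range_succ])
  have t4 : (223612713751713088468853443519/250000000000000000000000000000 : ℝ) * rr (50035571187/100000000 : ℝ) ≤ rr (40035571187/100000000 : ℝ) :=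
    rr_chunk (by norm_num) (by norm_num) (by norm_num [Finset.prod_range_succ])
  have t5 : (912887027172699536661923891803/1000000000000000000000000000000 : ℝ) * rr (60035571187/100000000 : ℝ) ≤ rr (50035571187/100000000 : ℝ) :=
    rr_chunk (by norm_num) (by norm_num) (by norm_num [Finset.prod_range_succ])
  have t6 : (925831759806914649886144320249/1000000000000000000000000000000 : ℝ) * rr (70035571187/100000000 : ℝ) ≤ rr (60035571187/100000000 : ℝ) :=
    rr_chunk (by norm_num) (by norm_num) (by norm_num [Finset.prod_range_succ])
  have t7 : (467711590718842083647495969681/500000000000000000000000000000 : ℝ) * rr (80035571187/100000000 : ℝ) ≤ rr (70035571187/100000000 : ℝ) :=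
    rr_chunk (by norm_num) (by norm_num) (by norm_num [Finset.prod_range_succ])
  have acc0 : (1 : ℝ) * rr (35571187/100000000 : ℝ) ≤ rr (35571187/100000000 : ℝ) := by rw [one_mul]
  have acc1 : (22097777342687372707793477343/500000000000000000000000000000 : ℝ) * rr (10035571187/100000000 : ℝ) ≤ rr (35571187/100000000 : ℝ) := by
    calc (22097777342687372707793477343/500000000000000000000000000000 : ℝ) * rr (10035571187/100000000 : ℝ) ≤ ((1 : ℝ) * (22097777342687372707793477343/500000000000000000000000000000 : ℝ)) * rr (10035571187/100000000 : ℝ) :=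
          mul_le_mul_of_nonneg_right (by norm_num) (rr_pos (by norm_num)).le
      _ = (1 : ℝ) * ((22097777342687372707793477343/500000000000000000000000000000 : ℝ) * rr (10035571187/100000000 : ℝ)) := by ring
      _ ≤ (1 : ℝ) * rr (35571187/100000000 : ℝ) := mul_le_mul_of_nonneg_left t0 (by norm_num)
      _ ≤ rr (35571187/100000000 : ℝ) := acc0
  have acc2 : (31259266502269488205071892327/1000000000000000000000000000000 : ℝ) * rr (20035571187/100000000 : ℝ) ≤ rr (35571187/100000000 : ℝ) := by
    calc (31259266502269488205071892327/1000000000000000000000000000000 : ℝ) * rr (20035571187/100000000 : ℝ) ≤ ((22097777342687372707793477343/500000000000000000000000000000 : ℝ) * (176823589639287004271321577113/250000000000000000000000000000 : ℝ)) * rr (20035571187/100000000 : ℝ) :=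
          mul_le_mul_of_nonneg_right (by norm_num) (rr_pos (by norm_num)).le
      _ = (22097777342687372707793477343/500000000000000000000000000000 : ℝ) * ((176823589639287004271321577113/250000000000000000000000000000 : ℝ) * rr (20035571187/100000000 : ℝ)) := by ring
      _ ≤ (22097777342687372707793477343/500000000000000000000000000000 : ℝ) * rr (10035571187/100000000 : ℝ) := mul_le_mul_of_nonneg_left t1 (by norm_num)
      _ ≤ rr (35571187/100000000 : ℝ) := acc1
  have acc3 : (25525337273166620419362169277/1000000000000000000000000000000 : ℝ) * rr (30035571187/100000000 : ℝ) ≤ rr (35571187/100000000 : ℝ) := by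
    calc (25525337273166620419362169277/1000000000000000000000000000000 : ℝ) * rr (30035571187/100000000 : ℝ) ≤ ((31259266502269488205071892327/1000000000000000000000000000000 : ℝ) * (163313731442248828731728925753/200000000000000000000000000000 : ℝ)) * rr (30035571187/100000000 : ℝ) :=
          mul_le_mul_of_nonneg_right (by norm_num) (rr_pos (by norm_num)).le
      _ = (31259266502269488205071892327/1000000000000000000000000000000 : ℝ) * ((163313731442248828731728925753/200000000000000000000000000000 : ℝ) * rr (30035571187/100000000 : ℝ)) := by ring
      _ ≤ (31259266502269488205071892327/1000000000000000000000000000000 : ℝ) * rr (20035571187/100000000 : ℝ) := mul_le_mul_of_nonneg_left t2 (by norm_num)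
      _ ≤ rr (35571187/100000000 : ℝ) := acc2
  have acc4 : (276332069924442040865575499/12500000000000000000000000000 : ℝ) * rr (40035571187/100000000 : ℝ) ≤ rr (35571187/100000000 : ℝ) := by
    calc (276332069924442040865575499/12500000000000000000000000000 : ℝ) * rr (40035571187/100000000 : ℝ) ≤ ((25525337273166620419362169277/1000000000000000000000000000000 : ℝ) * (433031802036065096352100801721/500000000000000000000000000000 : ℝ)) * rr (40035571187/100000000 : ℝ) :=
          mul_le_mul_of_nonneg_right (by norm_num) (rr_pos (by norm_num)).le
      _ = (25525337273166620419362169277/1000000000000000000000000000000 : ℝ) * ((433031802036065096352100801721/500000000000000000000000000000 : ℝ) * rr (40035571187/100000000 : ℝ)) := by ring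
      _ ≤ (25525337273166620419362169277/1000000000000000000000000000000 : ℝ) * rr (30035571187/100000000 : ℝ) := mul_le_mul_of_nonneg_left t3 (by norm_num)
      _ ≤ rr (35571187/100000000 : ℝ) := acc3
  have acc5 : (3954647299355687903686508889/200000000000000000000000000000 : ℝ) * rr (50035571187/100000000 : ℝ) ≤ rr (35571187/100000000 : ℝ) := by
    calc (3954647299355687903686508889/200000000000000000000000000000 : ℝ) * rr (50035571187/100000000 : ℝ) ≤ ((276332069924442040865575499/12500000000000000000000000000 : ℝ) * (223612713751713088468853443519/250000000000000000000000000000 : ℝ)) * rr (50035571187/100000000 : ℝ) :=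
          mul_le_mul_of_nonneg_right (by norm_num) (rr_pos (by norm_num)).le
      _ = (276332069924442040865575499/12500000000000000000000000000 : ℝ) * ((223612713751713088468853443519/250000000000000000000000000000 : ℝ) * rr (50035571187/100000000 : ℝ)) := by ring
      _ ≤ (276332069924442040865575499/12500000000000000000000000000 : ℝ) * rr (40035571187/100000000 : ℝ) := mul_le_mul_of_nonneg_left t4 (by norm_num)
      _ ≤ rr (35571187/100000000 : ℝ) := acc4
  have acc6 : (18050731083126793510981476853/1000000000000000000000000000000 : ℝ) * rr (60035571187/100000000 : ℝ) ≤ rr (35571187/100000000 : ℝ) := by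
    calc (18050731083126793510981476853/1000000000000000000000000000000 : ℝ) * rr (60035571187/100000000 : ℝ) ≤ ((3954647299355687903686508889/200000000000000000000000000000 : ℝ) * (912887027172699536661923891803/1000000000000000000000000000000 : ℝ)) * rr (60035571187/100000000 : ℝ) :=
          mul_le_mul_of_nonneg_right (by norm_num) (rr_pos (by norm_num)).le
      _ = (3954647299355687903686508889/200000000000000000000000000000 : ℝ) * ((912887027172699536661923891803/1000000000000000000000000000000 : ℝ) * rr (60035571187/100000000 : ℝ)) := by ring
      _ ≤ (3954647299355687903686508889/200000000000000000000000000000 : ℝ) * rr (50035571187/100000000 : ℝ) := mul_le_mul_of_nonneg_left t5 (by norm_num)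
      _ ≤ rr (35571187/100000000 : ℝ) := acc5
  have acc7 : (3342388024898530761686393153/200000000000000000000000000000 : ℝ) * rr (70035571187/100000000 : ℝ) ≤ rr (35571187/100000000 : ℝ) := by
    calc (3342388024898530761686393153/200000000000000000000000000000 : ℝ) * rr (70035571187/100000000 : ℝ) ≤ ((18050731083126793510981476853/1000000000000000000000000000000 : ℝ) * (925831759806914649886144320249/1000000000000000000000000000000 : ℝ)) * rr (70035571187/100000000 : ℝ) :=
          mul_le_mul_of_nonneg_right (by norm_num) (rr_pos (by norm_num)).le
      _ = (18050731083126793510981476853/1000000000000000000000000000000 : ℝ) * ((925831759806914649886144320249/1000000000000000000000000000000 : ℝ) * rr (70035571187/100000000 : ℝ)) := by ring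
      _ ≤ (18050731083126793510981476853/1000000000000000000000000000000 : ℝ) * rr (60035571187/100000000 : ℝ) := mul_le_mul_of_nonneg_left t6 (by norm_num)
      _ ≤ rr (35571187/100000000 : ℝ) := acc6
  have acc8 : (3126547239849801166777505029/200000000000000000000000000000 : ℝ) * rr (80035571187/100000000 : ℝ) ≤ rr (35571187/100000000 : ℝ) := by
    calc (3126547239849801166777505029/200000000000000000000000000000 : ℝ) * rr (80035571187/100000000 : ℝ) ≤ ((3342388024898530761686393153/200000000000000000000000000000 : ℝ) * (467711590718842083647495969681/500000000000000000000000000000 : ℝ)) * rr (80035571187/100000000 : ℝ) :=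
          mul_le_mul_of_nonneg_right (by norm_num) (rr_pos (by norm_num)).le
      _ = (3342388024898530761686393153/200000000000000000000000000000 : ℝ) * ((467711590718842083647495969681/500000000000000000000000000000 : ℝ) * rr (80035571187/100000000 : ℝ)) := by ring
      _ ≤ (3342388024898530761686393153/200000000000000000000000000000 : ℝ) * rr (70035571187/100000000 : ℝ) := mul_le_mul_of_nonneg_left t7 (by norm_num)
      _ ≤ rr (35571187/100000000 : ℝ) := acc7
  have hS : Real.sqrt ((80035571187/100000000 : ℝ) + 1/2) ≤ (141496970981/5000000000 : ℝ) := by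
    rw [show (141496970981/5000000000 : ℝ) = Real.sqrt ((141496970981/5000000000 : ℝ)^2) from (Real.sqrt_sq (by norm_num)).symm]
    exact Real.sqrt_le_sqrt (by norm_num)
  have hend : (14140862986697/500000000000 : ℝ) ≤ rr (80035571187/100000000 : ℝ) := by
    have h1 := sqrt_le_rr (show (0:ℝ) < (80035571187/100000000 : ℝ) by norm_num)
    have h2 : (80035571187/100000000 : ℝ) / (141496970981/5000000000 : ℝ) ≤ (80035571187/100000000 : ℝ) / Real.sqrt ((80035571187/100000000 : ℝ) + 1/2) :=
      div_le_div_of_nonneg_left (by norm_num) (Real.sqrt_pos.2 (by norm_num)) hS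
    calc (14140862986697/500000000000 : ℝ) ≤ (80035571187/100000000 : ℝ) / (141496970981/5000000000 : ℝ) := by norm_num
      _ ≤ (80035571187/100000000 : ℝ) / Real.sqrt ((80035571187/100000000 : ℝ) + 1/2) := h2
      _ ≤ rr (80035571187/100000000 : ℝ) := h1
  calc (442120761401/1000000000000 : ℝ) ≤ (3126547239849801166777505029/200000000000000000000000000000 : ℝ) * (14140862986697/500000000000 : ℝ) := by norm_num
    _ ≤ (3126547239849801166777505029/200000000000000000000000000000 : ℝ) * rr (80035571187/100000000 : ℝ) := mul_le_mul_of_nonneg_left hend (by norm_num)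
    _ ≤ rr (35571187/100000000 : ℝ) := acc8

lemma rr_a2_ub : rr (35559357/100000000 : ℝ) ≤ (110532851897/250000000000 : ℝ) := by
  have t0 : rr (35559357/100000000 : ℝ) ≤ (11046181889546749303421924077/250000000000000000000000000000 : ℝ) * rr (10035559357/100000000 : ℝ) :=
    rr_chunk' (by norm_num) (by norm_num) (by norm_num [Finset.prod_range_succ])
  have t1 : rr (10035559357/100000000 : ℝ) ≤ (353647074854127220259361992277/500000000000000000000000000000 : ℝ) * rr (20035559357/100000000 : ℝ) :=
    rr_chunk' (by norm_num) (by norm_num) (by norm_num [Finset.prod_range_succ])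
  have t2 : rr (20035559357/100000000 : ℝ) ≤ (816568576782281060400271254953/1000000000000000000000000000000 : ℝ) * rr (30035559357/100000000 : ℝ) :=
    rr_chunk' (by norm_num) (by norm_num) (by norm_num [Finset.prod_range_succ])
  have t3 : rr (30035559357/100000000 : ℝ) ≤ (433031780704389492648538040431/500000000000000000000000000000 : ℝ) * rr (40035559357/100000000 : ℝ) :=
    rr_chunk' (by norm_num) (by norm_num) (by norm_num [Finset.prod_range_succ])
  have t4 : rr (40035559357/100000000 : ℝ) ≤ (223612707141516579809056135821/250000000000000000000000000000 : ℝ) * rr (50035559357/100000000 : ℝ) :=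
    rr_chunk' (by norm_num) (by norm_num) (by norm_num [Finset.prod_range_succ])
  have t5 : rr (50035559357/100000000 : ℝ) ≤ (18257740183611851123388076181/20000000000000000000000000000 : ℝ) * rr (60035559357/100000000 : ℝ) :=
    rr_chunk' (by norm_num) (by norm_num) (by norm_num [Finset.prod_range_succ])
  have t6 : rr (60035559357/100000000 : ℝ) ≤ (925831746772386225001695217167/1000000000000000000000000000000 : ℝ) * rr (70035559357/100000000 : ℝ) :=
    rr_chunk' (by norm_num) (by norm_num) (by norm_num [Finset.prod_range_succ])
  have t7 : rr (70035559357/100000000 : ℝ) ≤ (93542317156007573628796723341/100000000000000000000000000000 : ℝ) * rr (80035559357/100000000 : ℝ) :=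
    rr_chunk' (by norm_num) (by norm_num) (by norm_num [Finset.prod_range_succ])
  have t8 : rr (80035559357/100000000 : ℝ) ≤ (942815959086782908225128872339/1000000000000000000000000000000 : ℝ) * rr (90035559357/100000000 : ℝ) :=
    rr_chunk' (by norm_num) (by norm_num) (by norm_num [Finset.prod_range_succ])
  have t9 : rr (90035559357/100000000 : ℝ) ≤ (474344433096143575386363362513/500000000000000000000000000000 : ℝ) * rr (100035559357/100000000 : ℝ) :=
    rr_chunk' (by norm_num) (by norm_num) (by norm_num [Finset.prod_range_succ])
  have t10 : rr (100035559357/100000000 : ℝ) ≤ (238366791930479123439166650669/250000000000000000000000000000 : ℝ) * rr (110035559357/100000000 : ℝ) :=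
    rr_chunk' (by norm_num) (by norm_num) (by norm_num [Finset.prod_range_succ])
  have acc0 : rr (35559357/100000000 : ℝ) ≤ (1 : ℝ) * rr (35559357/100000000 : ℝ) := by rw [one_mul]
  have acc1 : rr (35559357/100000000 : ℝ) ≤ (11046181889546749303421924077/250000000000000000000000000000 : ℝ) * rr (10035559357/100000000 : ℝ) := by
    calc rr (35559357/100000000 : ℝ) ≤ (1 : ℝ) * rr (35559357/100000000 : ℝ) := acc0
      _ ≤ (1 : ℝ) * ((11046181889546749303421924077/250000000000000000000000000000 : ℝ) * rr (10035559357/100000000 : ℝ)) := mul_le_mul_of_nonneg_left t0 (by norm_num)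
      _ = ((1 : ℝ) * (11046181889546749303421924077/250000000000000000000000000000 : ℝ)) * rr (10035559357/100000000 : ℝ) := by ring
      _ ≤ (11046181889546749303421924077/250000000000000000000000000000 : ℝ) * rr (10035559357/100000000 : ℝ) :=
          mul_le_mul_of_nonneg_right (by norm_num) (rr_pos (by norm_num)).le
  have acc2 : rr (35559357/100000000 : ℝ) ≤ (250012794466869997386532699/8000000000000000000000000000 : ℝ) * rr (20035559357/100000000 : ℝ) := by
    calc rr (35559357/100000000 : ℝ) ≤ (11046181889546749303421924077/250000000000000000000000000000 : ℝ) * rr (10035559357/100000000 : ℝ) := acc1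
      _ ≤ (11046181889546749303421924077/250000000000000000000000000000 : ℝ) * ((353647074854127220259361992277/500000000000000000000000000000 : ℝ) * rr (20035559357/100000000 : ℝ)) := mul_le_mul_of_nonneg_left t1 (by norm_num)
      _ = ((11046181889546749303421924077/250000000000000000000000000000 : ℝ) * (353647074854127220259361992277/500000000000000000000000000000 : ℝ)) * rr (20035559357/100000000 : ℝ) := by ring
      _ ≤ (250012794466869997386532699/8000000000000000000000000000 : ℝ) * rr (20035559357/100000000 : ℝ) :=
          mul_le_mul_of_nonneg_right (by norm_num) (rr_pos (by norm_num)).le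
  have acc3 : rr (35559357/100000000 : ℝ) ≤ (1275953698469831168201392869/50000000000000000000000000000 : ℝ) * rr (30035559357/100000000 : ℝ) := by
    calc rr (35559357/100000000 : ℝ) ≤ (250012794466869997386532699/8000000000000000000000000000 : ℝ) * rr (20035559357/100000000 : ℝ) := acc2
      _ ≤ (250012794466869997386532699/8000000000000000000000000000 : ℝ) * ((816568576782281060400271254953/1000000000000000000000000000000 : ℝ) * rr (30035559357/100000000 : ℝ)) := mul_le_mul_of_nonneg_left t2 (by norm_num)
      _ = ((250012794466869997386532699/8000000000000000000000000000 : ℝ) * (816568576782281060400271254953/1000000000000000000000000000000 : ℝ)) * rr (30035559357/100000000 : ℝ) := by ring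
      _ ≤ (1275953698469831168201392869/50000000000000000000000000000 : ℝ) * rr (30035559357/100000000 : ℝ) :=
          mul_le_mul_of_nonneg_right (by norm_num) (rr_pos (by norm_num)).le
  have acc4 : rr (35559357/100000000 : ℝ) ≤ (22101140085789705814956744709/1000000000000000000000000000000 : ℝ) * rr (40035559357/100000000 : ℝ) := by
    calc rr (35559357/100000000 : ℝ) ≤ (1275953698469831168201392869/50000000000000000000000000000 : ℝ) * rr (30035559357/100000000 : ℝ) := acc3
      _ ≤ (1275953698469831168201392869/50000000000000000000000000000 : ℝ) * ((433031780704389492648538040431/500000000000000000000000000000 : ℝ) * rr (40035559357/100000000 : ℝ)) := mul_le_mul_of_nonneg_left t3 (by norm_num)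
      _ = ((1275953698469831168201392869/50000000000000000000000000000 : ℝ) * (433031780704389492648538040431/500000000000000000000000000000 : ℝ)) * rr (40035559357/100000000 : ℝ) := by ring
      _ ≤ (22101140085789705814956744709/1000000000000000000000000000000 : ℝ) * rr (40035559357/100000000 : ℝ) :=
          mul_le_mul_of_nonneg_right (by norm_num) (rr_pos (by norm_num)).le
  have acc5 : rr (35559357/100000000 : ℝ) ≤ (19768383061989304419351629791/1000000000000000000000000000000 : ℝ) * rr (50035559357/100000000 : ℝ) := by
    calc rr (35559357/100000000 : ℝ) ≤ (22101140085789705814956744709/1000000000000000000000000000000 : ℝ) * rr (40035559357/100000000 : ℝ) := acc4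
      _ ≤ (22101140085789705814956744709/1000000000000000000000000000000 : ℝ) * ((223612707141516579809056135821/250000000000000000000000000000 : ℝ) * rr (50035559357/100000000 : ℝ)) := mul_le_mul_of_nonneg_left t4 (by norm_num)
      _ = ((22101140085789705814956744709/1000000000000000000000000000000 : ℝ) * (223612707141516579809056135821/250000000000000000000000000000 : ℝ)) * rr (50035559357/100000000 : ℝ) := by ring
      _ ≤ (19768383061989304419351629791/1000000000000000000000000000000 : ℝ) * rr (50035559357/100000000 : ℝ) :=
          mul_le_mul_of_nonneg_right (by norm_num) (rr_pos (by norm_num)).le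
  have acc6 : rr (35559357/100000000 : ℝ) ≤ (18046300089795700529872985359/1000000000000000000000000000000 : ℝ) * rr (60035559357/100000000 : ℝ) := by
    calc rr (35559357/100000000 : ℝ) ≤ (19768383061989304419351629791/1000000000000000000000000000000 : ℝ) * rr (50035559357/100000000 : ℝ) := acc5
      _ ≤ (19768383061989304419351629791/1000000000000000000000000000000 : ℝ) * ((18257740183611851123388076181/20000000000000000000000000000 : ℝ) * rr (60035559357/100000000 : ℝ)) := mul_le_mul_of_nonneg_left t5 (by norm_num)
      _ = ((19768383061989304419351629791/1000000000000000000000000000000 : ℝ) * (18257740183611851123388076181/20000000000000000000000000000 : ℝ)) * rr (60035559357/100000000 : ℝ) := by ring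
      _ ≤ (18046300089795700529872985359/1000000000000000000000000000000 : ℝ) * rr (60035559357/100000000 : ℝ) :=
          mul_le_mul_of_nonneg_right (by norm_num) (rr_pos (by norm_num)).le
  have acc7 : rr (35559357/100000000 : ℝ) ≤ (3341567506982844761294097149/200000000000000000000000000000 : ℝ) * rr (70035559357/100000000 : ℝ) := by
    calc rr (35559357/100000000 : ℝ) ≤ (18046300089795700529872985359/1000000000000000000000000000000 : ℝ) * rr (60035559357/100000000 : ℝ) := acc6
      _ ≤ (18046300089795700529872985359/1000000000000000000000000000000 : ℝ) * ((925831746772386225001695217167/1000000000000000000000000000000 : ℝ) * rr (70035559357/100000000 : ℝ)) := mul_le_mul_of_nonneg_left t6 (by norm_num)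
      _ = ((18046300089795700529872985359/1000000000000000000000000000000 : ℝ) * (925831746772386225001695217167/1000000000000000000000000000000 : ℝ)) * rr (70035559357/100000000 : ℝ) := by ring
      _ ≤ (3341567506982844761294097149/200000000000000000000000000000 : ℝ) * rr (70035559357/100000000 : ℝ) :=
          mul_le_mul_of_nonneg_right (by norm_num) (rr_pos (by norm_num)).le
  have acc8 : rr (35559357/100000000 : ℝ) ≤ (195361229710249260689989143/12500000000000000000000000000 : ℝ) * rr (80035559357/100000000 : ℝ) := by
    calc rr (35559357/100000000 : ℝ) ≤ (3341567506982844761294097149/200000000000000000000000000000 : ℝ) * rr (70035559357/100000000 : ℝ) := acc7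
      _ ≤ (3341567506982844761294097149/200000000000000000000000000000 : ℝ) * ((93542317156007573628796723341/100000000000000000000000000000 : ℝ) * rr (80035559357/100000000 : ℝ)) := mul_le_mul_of_nonneg_left t7 (by norm_num)
      _ = ((3341567506982844761294097149/200000000000000000000000000000 : ℝ) * (93542317156007573628796723341/100000000000000000000000000000 : ℝ)) * rr (80035559357/100000000 : ℝ) := by ring
      _ ≤ (195361229710249260689989143/12500000000000000000000000000 : ℝ) * rr (80035559357/100000000 : ℝ) :=
          mul_le_mul_of_nonneg_right (by norm_num) (rr_pos (by norm_num)).le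
  have acc9 : rr (35559357/100000000 : ℝ) ≤ (3683793703152839290303319943/250000000000000000000000000000 : ℝ) * rr (90035559357/100000000 : ℝ) := by
    calc rr (35559357/100000000 : ℝ) ≤ (195361229710249260689989143/12500000000000000000000000000 : ℝ) * rr (80035559357/100000000 : ℝ) := acc8
      _ ≤ (195361229710249260689989143/12500000000000000000000000000 : ℝ) * ((942815959086782908225128872339/1000000000000000000000000000000 : ℝ) * rr (90035559357/100000000 : ℝ)) := mul_le_mul_of_nonneg_left t8 (by norm_num)
      _ = ((195361229710249260689989143/12500000000000000000000000000 : ℝ) * (942815959086782908225128872339/1000000000000000000000000000000 : ℝ)) * rr (90035559357/100000000 : ℝ) := by ring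
      _ ≤ (3683793703152839290303319943/250000000000000000000000000000 : ℝ) * rr (90035559357/100000000 : ℝ) :=
          mul_le_mul_of_nonneg_right (by norm_num) (rr_pos (by norm_num)).le
  have acc10 : rr (35559357/100000000 : ℝ) ≤ (13979096286121415704847490873/1000000000000000000000000000000 : ℝ) * rr (100035559357/100000000 : ℝ) := by
    calc rr (35559357/100000000 : ℝ) ≤ (3683793703152839290303319943/250000000000000000000000000000 : ℝ) * rr (90035559357/100000000 : ℝ) := acc9
      _ ≤ (3683793703152839290303319943/250000000000000000000000000000 : ℝ) * ((474344433096143575386363362513/500000000000000000000000000000 : ℝ) * rr (100035559357/100000000 : ℝ)) := mul_le_mul_of_nonneg_left t9 (by norm_num)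
      _ = ((3683793703152839290303319943/250000000000000000000000000000 : ℝ) * (474344433096143575386363362513/500000000000000000000000000000 : ℝ)) * rr (100035559357/100000000 : ℝ) := by ring
      _ ≤ (13979096286121415704847490873/1000000000000000000000000000000 : ℝ) * rr (100035559357/100000000 : ℝ) :=
          mul_le_mul_of_nonneg_right (by norm_num) (rr_pos (by norm_num)).le
  have acc11 : rr (35559357/100000000 : ℝ) ≤ (13328609343240147826893857583/1000000000000000000000000000000 : ℝ) * rr (110035559357/100000000 : ℝ) := by
    calc rr (35559357/100000000 : ℝ) ≤ (13979096286121415704847490873/1000000000000000000000000000000 : ℝ) * rr (100035559357/100000000 : ℝ) := acc10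
      _ ≤ (13979096286121415704847490873/1000000000000000000000000000000 : ℝ) * ((238366791930479123439166650669/250000000000000000000000000000 : ℝ) * rr (110035559357/100000000 : ℝ)) := mul_le_mul_of_nonneg_left t10 (by norm_num)
      _ = ((13979096286121415704847490873/1000000000000000000000000000000 : ℝ) * (238366791930479123439166650669/250000000000000000000000000000 : ℝ)) * rr (110035559357/100000000 : ℝ) := by ring
      _ ≤ (13328609343240147826893857583/1000000000000000000000000000000 : ℝ) * rr (110035559357/100000000 : ℝ) :=
          mul_le_mul_of_nonneg_right (by norm_num) (rr_pos (by norm_num)).le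
  have hS : Real.sqrt (110035559357/100000000 : ℝ) ≤ (82929020613/2500000000 : ℝ) := by
    rw [show (82929020613/2500000000 : ℝ) = Real.sqrt ((82929020613/2500000000 : ℝ)^2) from (Real.sqrt_sq (by norm_num)).symm]
    exact Real.sqrt_le_sqrt (by norm_num)
  have hend : rr (110035559357/100000000 : ℝ) ≤ (82929020613/2500000000 : ℝ) := le_trans (rr_le_sqrt (by norm_num)) hS
  calc rr (35559357/100000000 : ℝ) ≤ (13328609343240147826893857583/1000000000000000000000000000000 : ℝ) * rr (110035559357/100000000 : ℝ) := acc11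
    _ ≤ (13328609343240147826893857583/1000000000000000000000000000000 : ℝ) * (82929020613/2500000000 : ℝ) := mul_le_mul_of_nonneg_left hend (by norm_num)
    _ ≤ (110532851897/250000000000 : ℝ) := by norm_num

noncomputable def gg (c : ℝ) : ℝ := Real.sqrt c * Real.tan (Real.sqrt c * (Real.pi/2))
noncomputable def hh (c : ℝ) : ℝ := 2 * (rr ((1 + Real.sqrt (1 - 4*c))/4))^2

lemma hardyEq_iff {c : ℝ} : hardyEq c (2*Real.pi) ↔ gg c = hh c := by
  unfold hardyEq gg hh rr
  rw [show (2*Real.pi - Real.pi)/2 = Real.pi/2 by ring,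
    show (3 + Real.sqrt (1 - 4*c))/4 = (1 + Real.sqrt (1 - 4*c))/4 + 1/2 by ring]

lemma tan_nonneg' {θ : ℝ} (h0 : 0 ≤ θ) (h1 : θ < Real.pi/2) : 0 ≤ Real.tan θ := by
  rw [Real.tan_eq_sin_div_cos]
  have hπ := Real.pi_pos
  exact div_nonneg (Real.sin_nonneg_of_nonneg_of_le_pi h0 (by linarith))
    (Real.cos_pos_of_mem_Ioo ⟨by linarith, h1⟩).le

lemma gg_lt {c d : ℝ} (hc : 0 < c) (hcd : c < d) (hd : d ≤ 1/4) : gg c < gg d := by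
  have hπ := Real.pi_pos
  have h1 : Real.sqrt c < Real.sqrt d := Real.sqrt_lt_sqrt hc.le hcd
  have h0c : 0 < Real.sqrt c := Real.sqrt_pos.2 hc
  have hsd : Real.sqrt d ≤ 1/2 := by
    rw [show (1/2:ℝ) = Real.sqrt ((1/2)^2) from (Real.sqrt_sq (by norm_num)).symm]
    exact Real.sqrt_le_sqrt (by nlinarith)
  have hθd : Real.sqrt d * (Real.pi/2) < Real.pi/2 := by nlinarith
  have htan : Real.tan (Real.sqrt c * (Real.pi/2)) < Real.tan (Real.sqrt d * (Real.pi/2)) :=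
    Real.tan_lt_tan_of_nonneg_of_lt_pi_div_two (by positivity) hθd (by nlinarith)
  have htnn : 0 ≤ Real.tan (Real.sqrt c * (Real.pi/2)) :=
    tan_nonneg' (by positivity) (by nlinarith)
  unfold gg
  exact mul_lt_mul'' h1 htan h0c.le htnn

lemma hh_anti {c d : ℝ} (hc : 0 < c) (hcd : c ≤ d) (hd : d ≤ 1/4) : hh d ≤ hh c := by
  have h1 : Real.sqrt (1 - 4*d) ≤ Real.sqrt (1 - 4*c) := Real.sqrt_le_sqrt (by linarith)
  have hxd : (0:ℝ) < (1 + Real.sqrt (1 - 4*d))/4 := by positivity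
  have hx : (1 + Real.sqrt (1 - 4*d))/4 ≤ (1 + Real.sqrt (1 - 4*c))/4 := by linarith
  have h2 : rr ((1 + Real.sqrt (1 - 4*d))/4) ≤ rr ((1 + Real.sqrt (1 - 4*c))/4) :=
    rr_mono hxd hx
  have h3 := rr_pos hxd
  unfold hh
  nlinarith

lemma gg_ub_2053 : gg (2053/10000 : ℝ) < (3909/10000 : ℝ) := by
  have hπl := Real.pi_gt_d6
  have hπu := Real.pi_lt_d6
  have hs : Real.sqrt (2053/10000 : ℝ) ≤ (11327511/25000000 : ℝ) := by
    rw [show (11327511/25000000 : ℝ) = Real.sqrt ((11327511/25000000 : ℝ)^2) from (Real.sqrt_sq (by norm_num)).symm]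
    exact Real.sqrt_le_sqrt (by norm_num)
  have hθub : Real.sqrt (2053/10000 : ℝ) * (Real.pi/2) ≤ (711728585301/1000000000000 : ℝ) := by
    calc Real.sqrt (2053/10000 : ℝ) * (Real.pi/2) ≤ (11327511/25000000 : ℝ) * (3.141593/2) := by
          apply mul_le_mul hs (by linarith) (by linarith) (by norm_num)
      _ ≤ (711728585301/1000000000000 : ℝ) := by norm_num
  have hθnn : (0:ℝ) ≤ Real.sqrt (2053/10000 : ℝ) * (Real.pi/2) := by positivity
  have ht1lt : (711728585301/1000000000000 : ℝ) < Real.pi/2 := by linarith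
  have htan : Real.tan (Real.sqrt (2053/10000 : ℝ) * (Real.pi/2)) ≤ Real.tan (711728585301/1000000000000 : ℝ) := by
    rcases eq_or_lt_of_le hθub with he | hl
    · rw [he]
    · exact (Real.tan_lt_tan_of_nonneg_of_lt_pi_div_two hθnn ht1lt hl).le
  have habs : |((711728585301/1000000000000 : ℝ) : ℝ)| ≤ 1 := by rw [abs_of_nonneg (by norm_num)]; norm_num
  have hsin1 : Real.sin (711728585301/1000000000000 : ℝ) ≤ (163286349583/250000000000 : ℝ) := by
    have h := (abs_sub_le_iff.1 (sin_poly_bound habs)).1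
    rw [abs_of_nonneg (show (0:ℝ) ≤ (711728585301/1000000000000 : ℝ) by norm_num)] at h
    norm_num at h ⊢
    linarith
  have hcos1 : (757230532243/1000000000000 : ℝ) ≤ Real.cos (711728585301/1000000000000 : ℝ) := by
    have h := (abs_sub_le_iff.1 (cos_poly_bound habs)).2
    rw [abs_of_nonneg (show (0:ℝ) ≤ (711728585301/1000000000000 : ℝ) by norm_num)] at h
    norm_num at h ⊢
    linarith
  have htan1 : Real.tan (711728585301/1000000000000 : ℝ) ≤ (163286349583/250000000000 : ℝ)/(757230532243/1000000000000 : ℝ) := by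
    rw [Real.tan_eq_sin_div_cos]
    exact div_le_div₀ (by norm_num) hsin1 (by norm_num) hcos1
  have htnn : 0 ≤ Real.tan (Real.sqrt (2053/10000 : ℝ) * (Real.pi/2)) :=
    tan_nonneg' hθnn (lt_of_le_of_lt hθub ht1lt)
  calc gg (2053/10000 : ℝ) = Real.sqrt (2053/10000 : ℝ) * Real.tan (Real.sqrt (2053/10000 : ℝ)*(Real.pi/2)) := rfl
    _ ≤ (11327511/25000000 : ℝ) * Real.tan (Real.sqrt (2053/10000 : ℝ)*(Real.pi/2)) :=
        mul_le_mul_of_nonneg_right hs htnn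
    _ ≤ (11327511/25000000 : ℝ) * ((163286349583/250000000000 : ℝ)/(757230532243/1000000000000 : ℝ)) :=
        mul_le_mul_of_nonneg_left (le_trans htan htan1) (by norm_num)
    _ < (3909/10000 : ℝ) := by norm_num

lemma gg_lb_2054 : (391/1000 : ℝ) < gg (1027/5000 : ℝ) := by
  have hπl := Real.pi_gt_d6
  have hπu := Real.pi_lt_d6
  have hs : (11330269/25000000 : ℝ) ≤ Real.sqrt (1027/5000 : ℝ) := by
    rw [show (11330269/25000000 : ℝ) = Real.sqrt ((11330269/25000000 : ℝ)^2) from (Real.sqrt_sq (by norm_num)).symm]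
    exact Real.sqrt_le_sqrt (by norm_num)
  have hshi : Real.sqrt (1027/5000 : ℝ) ≤ (45321077/100000000 : ℝ) := by
    rw [show (45321077/100000000 : ℝ) = Real.sqrt ((45321077/100000000 : ℝ)^2) from (Real.sqrt_sq (by norm_num)).symm]
    exact Real.sqrt_le_sqrt (by norm_num)
  have hθlb : (177975412241/250000000000 : ℝ) ≤ Real.sqrt (1027/5000 : ℝ) * (Real.pi/2) := by
    calc ((177975412241/250000000000 : ℝ):ℝ) ≤ (11330269/25000000 : ℝ) * (3.141592/2) := by norm_num
      _ ≤ Real.sqrt (1027/5000 : ℝ) * (Real.pi/2) := by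
          apply mul_le_mul hs (by linarith) (by norm_num) (Real.sqrt_nonneg _)
  have hθub : Real.sqrt (1027/5000 : ℝ) * (Real.pi/2) < Real.pi/2 := by
    have h := mul_le_mul hshi (show Real.pi/2 ≤ 3.141593/2 by linarith)
      (by linarith) (by norm_num)
    nlinarith
  have ht2 : (0:ℝ) ≤ (177975412241/250000000000 : ℝ) := by norm_num
  have htan : Real.tan (177975412241/250000000000 : ℝ) ≤ Real.tan (Real.sqrt (1027/5000 : ℝ) * (Real.pi/2)) := by
    rcases eq_or_lt_of_le hθlb with he | hl
    · rw [← he]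
    · exact (Real.tan_lt_tan_of_nonneg_of_lt_pi_div_two ht2 hθub hl).le
  have habs : |((177975412241/250000000000 : ℝ) : ℝ)| ≤ 1 := by rw [abs_of_nonneg (by norm_num)]; norm_num
  have hsin2 : (81659095007/125000000000 : ℝ) ≤ Real.sin (177975412241/250000000000 : ℝ) := by
    have h := (abs_sub_le_iff.1 (sin_poly_bound habs)).2
    rw [abs_of_nonneg (show (0:ℝ) ≤ (177975412241/250000000000 : ℝ) by norm_num)] at h
    norm_num at h ⊢
    linarith
  have hcos2 : Real.cos (177975412241/250000000000 : ℝ) ≤ (757121160209/1000000000000 : ℝ) := by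
    have h := (abs_sub_le_iff.1 (cos_poly_bound habs)).1
    rw [abs_of_nonneg (show (0:ℝ) ≤ (177975412241/250000000000 : ℝ) by norm_num)] at h
    norm_num at h ⊢
    linarith
  have hcpos : (0:ℝ) < Real.cos (177975412241/250000000000 : ℝ) := by
    have h := (abs_sub_le_iff.1 (cos_poly_bound habs)).2
    rw [abs_of_nonneg (show (0:ℝ) ≤ (177975412241/250000000000 : ℝ) by norm_num)] at h
    norm_num at h
    linarith
  have htan2 : (81659095007/125000000000 : ℝ)/(757121160209/1000000000000 : ℝ) ≤ Real.tan (177975412241/250000000000 : ℝ) := by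
    rw [Real.tan_eq_sin_div_cos]
    exact div_le_div₀ (le_trans (by norm_num) hsin2) hsin2 hcpos hcos2
  have htnn2 : 0 ≤ Real.tan (177975412241/250000000000 : ℝ) := le_trans (by norm_num) htan2
  calc (391/1000 : ℝ) < (11330269/25000000 : ℝ) * ((81659095007/125000000000 : ℝ)/(757121160209/1000000000000 : ℝ)) := by norm_num
    _ ≤ (11330269/25000000 : ℝ) * Real.tan (177975412241/250000000000 : ℝ) := mul_le_mul_of_nonneg_left htan2 (by norm_num)
    _ ≤ (11330269/25000000 : ℝ) * Real.tan (Real.sqrt (1027/5000 : ℝ) * (Real.pi/2)) :=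
        mul_le_mul_of_nonneg_left htan (by norm_num)
    _ ≤ Real.sqrt (1027/5000 : ℝ) * Real.tan (Real.sqrt (1027/5000 : ℝ) * (Real.pi/2)) :=
        mul_le_mul_of_nonneg_right hs (le_trans htnn2 htan)
    _ = gg (1027/5000 : ℝ) := rfl

lemma hh_lb_2053 : (3909/10000 : ℝ) ≤ hh (2053/10000 : ℝ) := by
  have e : (1 - 4*(2053/10000 : ℝ) : ℝ) = 0.1788 := by norm_num
  have hsq : (42284749/100000000 : ℝ) ≤ Real.sqrt (1 - 4*(2053/10000 : ℝ)) := by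
    rw [e, show (42284749/100000000 : ℝ) = Real.sqrt ((42284749/100000000 : ℝ)^2) from (Real.sqrt_sq (by norm_num)).symm]
    exact Real.sqrt_le_sqrt (by norm_num)
  have hx : (35571187/100000000 : ℝ) ≤ (1 + Real.sqrt (1 - 4*(2053/10000 : ℝ)))/4 := by linarith
  have h1 : rr (35571187/100000000 : ℝ) ≤ rr ((1 + Real.sqrt (1 - 4*(2053/10000 : ℝ)))/4) :=
    rr_mono (by norm_num) hx
  have h2 := rr_a1_lb
  unfold hh
  nlinarith [h1, h2]

lemma hh_ub_2054 : hh (1027/5000 : ℝ) ≤ (391/1000 : ℝ) := by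
  have e : (1 - 4*(1027/5000 : ℝ) : ℝ) = 0.1784 := by norm_num
  have hsq : Real.sqrt (1 - 4*(1027/5000 : ℝ)) ≤ (1689497/4000000 : ℝ) := by
    rw [e, show (1689497/4000000 : ℝ) = Real.sqrt ((1689497/4000000 : ℝ)^2) from (Real.sqrt_sq (by norm_num)).symm]
    exact Real.sqrt_le_sqrt (by norm_num)
  have hx2pos : (0:ℝ) < (1 + Real.sqrt (1 - 4*(1027/5000 : ℝ)))/4 := by positivity
  have hx : (1 + Real.sqrt (1 - 4*(1027/5000 : ℝ)))/4 ≤ (35559357/100000000 : ℝ) := by linarith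
  have h1 : rr ((1 + Real.sqrt (1 - 4*(1027/5000 : ℝ)))/4) ≤ rr (35559357/100000000 : ℝ) := rr_mono hx2pos hx
  have h2 := rr_a2_ub
  have h3 := (rr_pos hx2pos).le
  unfold hh
  nlinarith [h1, h2, h3]

lemma F_cont : ContinuousOn (fun c => gg c - hh c) (Icc ((2053/10000 : ℝ):ℝ) (1027/5000 : ℝ)) := by
  apply ContinuousOn.sub
  · intro c hc
    apply ContinuousAt.continuousWithinAt
    have hc0 : (0:ℝ) < c := lt_of_lt_of_le (by norm_num) hc.1
    have hc1 : c < 1 := lt_of_le_of_lt hc.2 (by norm_num)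
    have hπ := Real.pi_pos
    have hs1 : Real.sqrt c < 1 := by
      rw [show (1:ℝ) = Real.sqrt 1 from Real.sqrt_one.symm]
      exact Real.sqrt_lt_sqrt hc0.le hc1
    have hsnn : 0 ≤ Real.sqrt c := Real.sqrt_nonneg _
    have hcos : Real.cos (Real.sqrt c * (Real.pi/2)) ≠ 0 := by
      refine (Real.cos_pos_of_mem_Ioo ⟨by nlinarith, by nlinarith⟩).ne'
    have hu : ContinuousAt (fun c : ℝ => Real.sqrt c * (Real.pi/2)) c :=
      (Real.continuous_sqrt.continuousAt).mul continuousAt_const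
    have htc : ContinuousAt (fun c : ℝ => Real.tan (Real.sqrt c * (Real.pi/2))) c :=
      ContinuousAt.comp (g := Real.tan) (f := fun c : ℝ => Real.sqrt c * (Real.pi/2))
        (Real.continuousAt_tan.2 hcos) hu
    exact ContinuousAt.mul Real.continuous_sqrt.continuousAt htc
  · intro c hc
    apply ContinuousAt.continuousWithinAt
    have hc2 : c ≤ (1027/5000 : ℝ) := hc.2
    have hxpos : (0:ℝ) < (1 + Real.sqrt (1 - 4*c))/4 := by positivity
    have hxc : ContinuousAt (fun c : ℝ => (1 + Real.sqrt (1 - 4*c))/4) c := by fun_prop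
    have hx12 : ContinuousAt (fun c : ℝ => (1 + Real.sqrt (1 - 4*c))/4 + 1/2) c :=
      hxc.add continuousAt_const
    have hΓ1 : ContinuousAt Real.Gamma ((1 + Real.sqrt (1 - 4*c))/4) :=
      (Real.differentiableAt_Gamma (fun m =>
        ne_of_gt (lt_of_le_of_lt (neg_nonpos.2 (Nat.cast_nonneg m)) hxpos))).continuousAt
    have hΓ2 : ContinuousAt Real.Gamma ((1 + Real.sqrt (1 - 4*c))/4 + 1/2) :=
      (Real.differentiableAt_Gamma (fun m =>
        ne_of_gt (lt_of_le_of_lt (neg_nonpos.2 (Nat.cast_nonneg m))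
          (by linarith)))).continuousAt
    have hne : Real.Gamma ((1 + Real.sqrt (1 - 4*c))/4) ≠ 0 :=
      (Real.Gamma_pos_of_pos hxpos).ne'
    have : ContinuousAt (fun c : ℝ => rr ((1 + Real.sqrt (1 - 4*c))/4)) c := by
      unfold rr
      have q2 : ContinuousAt (fun c : ℝ => Real.Gamma ((1 + Real.sqrt (1 - 4*c))/4 + 1/2)) c :=
        ContinuousAt.comp (g := Real.Gamma)
          (f := fun c : ℝ => (1 + Real.sqrt (1 - 4*c))/4 + 1/2) hΓ2 hx12
      have q1 : ContinuousAt (fun c : ℝ => Real.Gamma ((1 + Real.sqrt (1 - 4*c))/4)) c :=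
        ContinuousAt.comp (g := Real.Gamma)
          (f := fun c : ℝ => (1 + Real.sqrt (1 - 4*c))/4) hΓ1 hxc
      exact ContinuousAt.div q2 q1 hne
    unfold hh
    exact continuousAt_const.mul (this.pow 2)

theorem hardy_constant_two_pi_bounds :
    (∃! c : ℝ, c ∈ Set.Ioc (0 : ℝ) (1 / 4) ∧ hardyEq c (2 * Real.pi)) ∧
    ∀ c : ℝ, c ∈ Set.Ioc (0 : ℝ) (1 / 4) → hardyEq c (2 * Real.pi) →
      (0.2053 : ℝ) < c ∧ c < (0.2054 : ℝ) := by
  have hF1 : gg (2053/10000 : ℝ) - hh (2053/10000 : ℝ) < 0 := by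
    have := gg_ub_2053; have := hh_lb_2053; linarith
  have hF2 : 0 < gg (1027/5000 : ℝ) - hh (1027/5000 : ℝ) := by
    have := gg_lb_2054; have := hh_ub_2054; linarith
  have key : ∀ x y : ℝ, 0 < x → x < y → y ≤ 1/4 → gg x - hh x < gg y - hh y := by
    intro x y hx hxy hy
    have h1 := gg_lt hx hxy hy
    have h2 := hh_anti hx hxy.le hy
    linarith
  have hsub := intermediate_value_Ioo (by norm_num : ((2053/10000 : ℝ):ℝ) ≤ (1027/5000 : ℝ)) F_cont
  have h0mem : (0:ℝ) ∈ Ioo (gg (2053/10000 : ℝ) - hh (2053/10000 : ℝ)) (gg (1027/5000 : ℝ) - hh (1027/5000 : ℝ)) := ⟨hF1, hF2⟩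
  obtain ⟨c₀, hc₀I, hc₀⟩ := hsub h0mem
  simp only at hc₀
  have hc₀eq : gg c₀ = hh c₀ := by linarith
  have hmemc₀ : c₀ ∈ Set.Ioc (0:ℝ) (1/4) :=
    ⟨lt_trans (by norm_num) hc₀I.1, le_of_lt (lt_of_lt_of_le hc₀I.2 (by norm_num))⟩
  have bound : ∀ y : ℝ, y ∈ Set.Ioc (0:ℝ) (1/4) → hardyEq y (2*Real.pi) →
      (0.2053:ℝ) < y ∧ y < (0.2054:ℝ) := by
    intro y hy heq
    have heq' : gg y = hh y := hardyEq_iff.1 heq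
    have e1 : (0.2053:ℝ) = (2053/10000 : ℝ) := by norm_num
    have e2 : (0.2054:ℝ) = (1027/5000 : ℝ) := by norm_num
    rw [e1, e2]
    constructor
    · by_contra hcon
      push_neg at hcon
      rcases eq_or_lt_of_le hcon with he | hl
      · rw [← he] at hF1; linarith
      · have := key y (2053/10000 : ℝ) hy.1 hl (by norm_num)
        linarith
    · by_contra hcon
      push_neg at hcon
      rcases eq_or_lt_of_le hcon with he | hl
      · rw [he] at hF2; linarith
      · have := key (1027/5000 : ℝ) y (by norm_num) hl hy.2
        linarith
  refine ⟨⟨c₀, ⟨hmemc₀, hardyEq_iff.2 hc₀eq⟩, ?_⟩, bound⟩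
  intro y hy2
  obtain ⟨hymem, hyeq⟩ := hy2
  have h1 : gg y = hh y := hardyEq_iff.1 hyeq
  rcases lt_trichotomy y c₀ with h | h | h
  · exfalso; have := key y c₀ hymem.1 h hmemc₀.2; linarith
  · exact h
  · exfalso; have := key c₀ y hmemc₀.1 h hymem.2; linarith
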